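/- Let K ⊆ ℝⁿ be a convex body. If points y_1,…,y_m ∈ ℝⁿ∖K are such that every x ∈ K is t-c-illuminated by some y_i, and if λ_1,…,λ_m > 1 and c_1,…,c_m ∈ int(K), then each point z_i := c_i + λ_i(y_i − c_i) lies in ℝⁿ∖K, and every x ∈ K is c-illuminated by some z_i. -/

import Mathlib

open Metric Set

/-- Auxiliary scalar/vector identity. -/
lemma tc_aux {V : Type*} [AddCommGroup V] [Module ℝ V] (x y c : V) (ε δ lam t a b : ℝ)
    (hbe : b * ε = δ * lam) (ht : t = δ * (lam - 1)) (ha : a = 1 - b - t) :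
    t • c + (a • x + b • (x + ε • (x - y))) = x + δ • (x - (c + lam • (y - c))) := by
  subst ha ht
  match_scalars <;>
    first
      | ring1
      | linear_combination hbe
      | linear_combination -hbe

/-- If points `y_1, …, y_m ∈ ℝⁿ ∖ K` t-c-illuminate the convex body `K`, then for any
`λ_1, …, λ_m > 1` and `c_1, …, c_m ∈ int K`, the points `z_i = c_i + λ_i • (y_i - c_i)`
lie outside `K` and c-illuminate `K`. -/
theorem tc_illumination_to_c_illumination {n m : ℕ} (K : Set (EuclideanSpace ℝ (Fin n)))
    (hKc : IsCompact K) (hKconv : Convex ℝ K) (hKint : (interior K).Nonempty)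
    (y : Fin m → EuclideanSpace ℝ (Fin n)) (hy : ∀ i, y i ∉ K)
    (hillum : ∀ x ∈ K, ∃ i, ∃ ε : ℝ, 0 < ε ∧ x + ε • (x - y i) ∈ K)
    (lam : Fin m → ℝ) (hlam : ∀ i, 1 < lam i)
    (c : Fin m → EuclideanSpace ℝ (Fin n)) (hc : ∀ i, c i ∈ interior K) :
    (∀ i, c i + lam i • (y i - c i) ∉ K) ∧
    (∀ x ∈ K, ∃ i, ∃ ε : ℝ, 0 < ε ∧
      x + ε • (x - (c i + lam i • (y i - c i))) ∈ interior K) := by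
  have hclosed : IsClosed K := hKc.isClosed
  constructor
  · intro i hzi
    have hlam0 : (0:ℝ) < lam i := lt_trans one_pos (hlam i)
    have hmem : (1 - 1/lam i) • c i + (1/lam i) • (c i + lam i • (y i - c i)) ∈ interior K :=
      hKconv.combo_interior_closure_mem_interior (hc i)
        (by rwa [hclosed.closure_eq])
        (by rw [sub_pos, div_lt_one hlam0]; exact hlam i)
        (by positivity) (by ring)
    have h0 : lam i ≠ 0 := hlam0.ne'
    have heq : (1 - 1/lam i) • c i + (1/lam i) • (c i + lam i • (y i - c i)) = y i := by
      match_scalars <;> field_simp <;> ring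
    exact hy i (interior_subset (heq ▸ hmem))
  · intro x hx
    obtain ⟨i, ε, hε, hw⟩ := hillum x hx
    have hlam0 : (0:ℝ) < lam i := lt_trans one_pos (hlam i)
    have hlam1 : (0:ℝ) < lam i - 1 := by linarith [hlam i]
    obtain ⟨δ, hδdef⟩ : ∃ d : ℝ, d = 1 / (lam i / ε + lam i) := ⟨_, rfl⟩
    obtain ⟨b, hbdef⟩ : ∃ d : ℝ, d = δ * lam i / ε := ⟨_, rfl⟩
    obtain ⟨t, htdef⟩ : ∃ d : ℝ, d = δ * (lam i - 1) := ⟨_, rfl⟩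
    obtain ⟨a, hadef⟩ : ∃ d : ℝ, d = 1 - b - t := ⟨_, rfl⟩
    have hδpos : 0 < δ := by rw [hδdef]; positivity
    have hb : 0 < b := by rw [hbdef]; positivity
    have ht : 0 < t := by rw [htdef]; positivity
    have ha : 0 < a := by
      have haδ : a = δ := by
        rw [hadef, hbdef, htdef, hδdef]
        field_simp
        ring
      rw [haδ]; exact hδpos
    have hab : 0 < a + b := by positivity
    refine ⟨i, δ, hδpos, ?_⟩
    have hqK : (a/(a+b)) • x + (b/(a+b)) • (x + ε • (x - y i)) ∈ K :=
      hKconv hx hw (by positivity) (by positivity)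
        (by rw [← add_div, div_self hab.ne'])
    have habt : t + (a+b) = 1 := by rw [hadef]; ring
    have hmem := hKconv.combo_interior_closure_mem_interior (hc i)
      (subset_closure hqK) ht hab.le habt
    have hcollapse : (a+b) • ((a/(a+b)) • x + (b/(a+b)) • (x + ε • (x - y i)))
        = a • x + b • (x + ε • (x - y i)) := by
      rw [smul_add, smul_smul, smul_smul,
        show (a+b) * (a/(a+b)) = a from by field_simp,
        show (a+b) * (b/(a+b)) = b from by field_simp]
    rw [hcollapse] at hmem
    have hbe : b * ε = δ * lam i := by rw [hbdef]; field_simp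
    have heq := tc_aux x (y i) (c i) ε δ (lam i) t a b hbe htdef hadef
    rw [heq] at hmem
    exact hmem
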